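/- Every nonzero nonunit f ∈ Int(ℤ) has only finitely many essentially different factorizations into irreducibles in Int(ℤ): the set of multisets of associate classes of irreducible elements of Int(ℤ) whose product is the associate class of f is finite. -/

import Mathlib

open Polynomial

/-- The ring of integer-valued polynomials `Int(ℤ) = {f ∈ ℚ[X] | f(ℤ) ⊆ ℤ}`,
as a subring of ℚ[X]. -/
noncomputable def IntValued : Subring (Polynomial ℚ) where
  carrier := {f | ∀ c : ℤ, ∃ m : ℤ, f.eval (c : ℚ) = (m : ℚ)}
  zero_mem' := fun c => ⟨0, by simp⟩
  one_mem' := fun c => ⟨1, by simp⟩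
  add_mem' := by
    rintro f g hf hg c
    obtain ⟨m, hm⟩ := hf c
    obtain ⟨n, hn⟩ := hg c
    exact ⟨m + n, by simp [hm, hn]⟩
  mul_mem' := by
    rintro f g hf hg c
    obtain ⟨m, hm⟩ := hf c
    obtain ⟨n, hn⟩ := hg c
    exact ⟨m * n, by simp [hm, hn]⟩
  neg_mem' := by
    rintro f hf c
    obtain ⟨m, hm⟩ := hf c
    exact ⟨-m, by simp [hm]⟩

namespace IntValuedAux

open UniqueFactorizationMonoid

/-- The integer value of `g` at an integer point. -/
noncomputable def ev (g : IntValued) (n : ℤ) : ℤ := (g.2 n).choose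

lemma ev_spec (g : IntValued) (n : ℤ) :
    ((ev g n : ℤ) : ℚ) = (g : ℚ[X]).eval (n : ℚ) := (g.2 n).choose_spec.symm

lemma ivCoe_injective : Function.Injective (fun g : IntValued => (g : ℚ[X])) :=
  fun _ _ h => Subtype.ext h

lemma coe_ne_zero {g : IntValued} (h : g ≠ 0) : (g : ℚ[X]) ≠ 0 := by
  intro h0
  exact h (ivCoe_injective (by simpa using h0))

lemma ev_mul (g h : IntValued) (n : ℤ) : ev (g * h) n = ev g n * ev h n := by
  have := ev_spec (g * h) n
  have hg := ev_spec g n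
  have hh := ev_spec h n
  have : ((ev (g * h) n : ℤ) : ℚ) = ((ev g n * ev h n : ℤ) : ℚ) := by
    push_cast
    rw [this, hg, hh]
    simp [Subring.coe_mul, eval_mul]
  exact_mod_cast this

lemma ne_zero_of_ev_ne_zero {g : IntValued} {n : ℤ} (h : ev g n ≠ 0) : (g : ℚ[X]) ≠ 0 := by
  intro h0
  apply h
  have h1 : ((ev g n : ℤ) : ℚ) = 0 := by rw [ev_spec, h0]; simp
  exact_mod_cast h1

/-- number of prime factors of an integer -/
noncomputable def Ω (m : ℤ) : ℕ := (normalizedFactors m).card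

lemma Ω_mul {a b : ℤ} (ha : a ≠ 0) (hb : b ≠ 0) : Ω (a * b) = Ω a + Ω b := by
  unfold Ω
  rw [normalizedFactors_mul ha hb, Multiset.card_add]

lemma Ω_pos {a : ℤ} (ha : a ≠ 0) (hu : ¬IsUnit a) : 1 ≤ Ω a := by
  by_contra h
  push_neg at h
  unfold Ω at h
  have h0 : normalizedFactors a = 0 := Multiset.card_eq_zero.mp (by omega)
  have := prod_normalizedFactors ha
  rw [h0] at this
  simp at this
  exact hu (associated_one_iff_isUnit.mp this.symm)

/-- The length measure at base point `n₀`. -/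
noncomputable def μ (n₀ : ℤ) (g : IntValued) : ℕ := (g : ℚ[X]).natDegree + Ω (ev g n₀)

lemma μ_mul {n₀ : ℤ} {g h : IntValued} (hg : ev g n₀ ≠ 0) (hh : ev h n₀ ≠ 0) :
    μ n₀ (g * h) = μ n₀ g + μ n₀ h := by
  unfold μ
  have hg0 := ne_zero_of_ev_ne_zero hg
  have hh0 := ne_zero_of_ev_ne_zero hh
  have hcoe : ((g * h : IntValued) : ℚ[X]) = (g : ℚ[X]) * (h : ℚ[X]) := rfl
  rw [hcoe, natDegree_mul hg0 hh0, ev_mul, Ω_mul hg hh]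
  ring

lemma unit_of_pm_one {g : IntValued} (h : (g : ℚ[X]) = 1 ∨ (g : ℚ[X]) = -1) : IsUnit g := by
  rcases h with h | h
  · have : g = 1 := ivCoe_injective (by simpa using h)
    exact this ▸ isUnit_one
  · have : g = -1 := ivCoe_injective (by simpa using h)
    rw [this]
    exact IsUnit.neg isUnit_one

lemma μ_pos {n₀ : ℤ} {g : IntValued} (hu : ¬IsUnit g) (he : ev g n₀ ≠ 0) : 1 ≤ μ n₀ g := by
  unfold μ
  rcases Nat.eq_zero_or_pos (g : ℚ[X]).natDegree with hd | hd
  · obtain ⟨q, hq⟩ := natDegree_eq_zero.mp hd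
    have hev : ((ev g n₀ : ℤ) : ℚ) = q := by
      rw [ev_spec, ← hq, eval_C]
    have hgm : (g : ℚ[X]) = C ((ev g n₀ : ℤ) : ℚ) := by rw [hev, hq]
    have hmu : ¬IsUnit (ev g n₀) := by
      intro hun
      rcases Int.isUnit_iff.mp hun with h1 | h1 <;>
        exact hu (unit_of_pm_one (by rw [hgm, h1]; norm_num))
    have := Ω_pos he hmu
    omega
  · omega

lemma card_le_μ (n₀ : ℤ) : ∀ (t : Multiset IntValued), (∀ x ∈ t, ¬IsUnit x) →
    ev t.prod n₀ ≠ 0 → Multiset.card t ≤ μ n₀ t.prod := by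
  intro t
  induction t using Multiset.induction_on with
  | empty => intro _ _; simp
  | cons a t ih =>
    intro hu hne
    rw [Multiset.prod_cons] at hne ⊢
    rw [ev_mul] at hne
    have ha : ev a n₀ ≠ 0 := left_ne_zero_of_mul hne
    have ht : ev t.prod n₀ ≠ 0 := right_ne_zero_of_mul hne
    rw [μ_mul ha ht]
    have h1 := μ_pos (hu a (Multiset.mem_cons_self a t)) ha
    have h2 := ih (fun x hx => hu x (Multiset.mem_cons_of_mem hx)) ht
    simp only [Multiset.card_cons]
    omega

end IntValuedAux

open IntValuedAux UniqueFactorizationMonoid in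
/-- Remark 2 (iv): every nonzero nonunit of `Int(ℤ)` has only finitely many
essentially different factorizations into irreducibles. -/
theorem finitely_many_factorizations (f : IntValued) (hf0 : f ≠ 0) (hfu : ¬IsUnit f) :
    {s : Multiset (Associates IntValued) |
      (∀ a ∈ s, Irreducible a) ∧ s.prod = Associates.mk f}.Finite := by
  classical
  have hfpoly : (f : ℚ[X]) ≠ 0 := coe_ne_zero hf0
  -- a base point where f doesn't vanish
  obtain ⟨n₀, hn₀⟩ : ∃ n₀ : ℤ, (f : ℚ[X]).eval (n₀ : ℚ) ≠ 0 := by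
    by_contra h
    push_neg at h
    apply hfpoly
    apply Polynomial.eq_zero_of_infinite_isRoot
    apply Set.Infinite.mono (s := Set.range (fun n : ℤ => (n : ℚ)))
    · rintro x ⟨n, rfl⟩; exact h n
    · exact Set.infinite_range_of_injective (fun a b hab => by exact_mod_cast hab)
  have hm : ev f n₀ ≠ 0 := by
    intro h0
    apply hn₀
    rw [← ev_spec, h0]; simp
  set m : ℤ := ev f n₀ with hmdef
  -- eval of divisors of f is nonzero
  have hev_dvd : ∀ {g : IntValued}, g ∣ f → ev g n₀ ∣ m ∧ ev g n₀ ≠ 0 := by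
    rintro g ⟨h, rfl⟩
    rw [hmdef, ev_mul] at hm ⊢
    exact ⟨Dvd.intro _ rfl, left_ne_zero_of_mul hm⟩
  -- divisors of ↑f in ℚ[X] don't vanish at n₀
  have hpoly_dvd : ∀ {d : ℚ[X]}, d ∣ (f : ℚ[X]) → d.eval (n₀ : ℚ) ≠ 0 := by
    rintro d ⟨e, he⟩ h0
    apply hn₀
    rw [he, eval_mul, h0, zero_mul]
  -- set of monic divisors of ↑f is finite
  have hM : {d : ℚ[X] | d ∣ (f : ℚ[X]) ∧ d.Monic}.Finite := by
    have himg : ((fun d => normalizedFactors d) ''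
        {d : ℚ[X] | d ∣ (f : ℚ[X]) ∧ d.Monic}).Finite := by
      apply Set.Finite.subset ((normalizedFactors (f : ℚ[X])).powerset.finite_toSet)
      rintro t ⟨d, ⟨hdvd, hmon⟩, rfl⟩
      simp only [Multiset.mem_coe, Multiset.mem_powerset]
      exact (dvd_iff_normalizedFactors_le_normalizedFactors hmon.ne_zero hfpoly).mp hdvd
    apply Set.Finite.of_finite_image himg
    rintro d₁ ⟨hd₁, hm₁⟩ d₂ ⟨hd₂, hm₂⟩ heq
    simp only at heq
    have h1 := prod_normalizedFactors hm₁.ne_zero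
    have h2 := prod_normalizedFactors hm₂.ne_zero
    rw [heq] at h1
    exact eq_of_monic_of_associated hm₁ hm₂ (h1.symm.trans h2)
  -- set of integer divisors of m is finite
  have hZ : {k : ℤ | k ∣ m}.Finite := by
    apply Set.Finite.subset (Set.finite_Icc (-(|m|)) (|m|))
    intro k hk
    have := Int.le_of_dvd (abs_pos.mpr hm) ((dvd_abs k m).mpr hk)
    have h2 := Int.le_of_dvd (abs_pos.mpr hm) ((abs_dvd k (|m|)).mpr ((dvd_abs k m).mpr hk))
    constructor
    · have := neg_abs_le k; omega
    · have := le_abs_self k; omega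
  -- the set of divisors of f in IntValued is finite
  have hD : {g : IntValued | g ∣ f}.Finite := by
    have himg : ((fun g : IntValued => ((normalize (g : ℚ[X]), ev g n₀) : ℚ[X] × ℤ)) ''
        {g : IntValued | g ∣ f}).Finite := by
      apply Set.Finite.subset (hM.prod hZ)
      rintro p ⟨g, hg, rfl⟩
      obtain ⟨h, hfgh⟩ := hg
      have hgf : (g : ℚ[X]) ∣ (f : ℚ[X]) := ⟨(h : ℚ[X]), by rw [hfgh]; rfl⟩
      have hg0 : (g : ℚ[X]) ≠ 0 := fun h0 => hfpoly (by
        rw [hfgh]; show (g : ℚ[X]) * (h : ℚ[X]) = 0; rw [h0, zero_mul])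
      refine ⟨⟨normalize_dvd_iff.mpr hgf, monic_normalize hg0⟩, ?_⟩
      exact (hev_dvd ⟨h, hfgh⟩).1
    apply Set.Finite.of_finite_image himg
    rintro g₁ hg₁ g₂ hg₂ heq
    simp only [Prod.mk.injEq] at heq
    obtain ⟨hnorm, hevv⟩ := heq
    have hg₁f : (g₁ : ℚ[X]) ∣ (f : ℚ[X]) := by
      obtain ⟨h, hfgh⟩ := hg₁; exact ⟨(h : ℚ[X]), by rw [hfgh]; rfl⟩
    have hg₂f : (g₂ : ℚ[X]) ∣ (f : ℚ[X]) := by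
      obtain ⟨h, hfgh⟩ := hg₂; exact ⟨(h : ℚ[X]), by rw [hfgh]; rfl⟩
    have hg₁0 : (g₁ : ℚ[X]) ≠ 0 := fun h0 => hfpoly (by
      obtain ⟨e, he⟩ := hg₁f; rw [he, h0, zero_mul])
    have hg₂0 : (g₂ : ℚ[X]) ≠ 0 := fun h0 => hfpoly (by
      obtain ⟨e, he⟩ := hg₂f; rw [he, h0, zero_mul])
    have hw : (normalize (g₁ : ℚ[X])).eval (n₀ : ℚ) ≠ 0 :=
      hpoly_dvd (normalize_dvd_iff.mpr hg₁f)
    obtain ⟨u₁, hu₁⟩ := normalize_associated (g₁ : ℚ[X])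
    obtain ⟨u₂, hu₂⟩ := normalize_associated (g₂ : ℚ[X])
    obtain ⟨c₁, hc₁⟩ := Polynomial.isUnit_iff.mp u₁.isUnit
    obtain ⟨c₂, hc₂⟩ := Polynomial.isUnit_iff.mp u₂.isUnit
    have he1 : ((ev g₁ n₀ : ℤ) : ℚ) = (normalize (g₁ : ℚ[X])).eval (n₀ : ℚ) * c₁ := by
      conv_lhs => rw [ev_spec, ← hu₁, ← hc₁.2]
      rw [eval_mul, eval_C]
    have he2 : ((ev g₂ n₀ : ℤ) : ℚ) = (normalize (g₁ : ℚ[X])).eval (n₀ : ℚ) * c₂ := by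
      conv_lhs => rw [ev_spec, ← hu₂, ← hc₂.2]
      rw [eval_mul, eval_C, ← hnorm]
    have hq : ((ev g₁ n₀ : ℤ) : ℚ) = ((ev g₂ n₀ : ℤ) : ℚ) := by rw [hevv]
    have hcc : c₁ = c₂ := mul_left_cancel₀ hw (by rw [← he1, ← he2]; exact hq)
    apply ivCoe_injective
    show (g₁ : ℚ[X]) = (g₂ : ℚ[X])
    conv_lhs => rw [← hu₁, ← hc₁.2]
    conv_rhs => rw [← hu₂, ← hc₂.2]
    rw [hcc, hnorm]
  -- the bound on the number of factors
  set N : ℕ := μ n₀ f with hN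
  have hcard : ∀ (t : Multiset IntValued), (∀ x ∈ t, ¬IsUnit x) → t.prod ∣ f →
      Multiset.card t ≤ N := by
    intro t hu hdvd
    obtain ⟨hdvdm, hne⟩ := hev_dvd hdvd
    refine le_trans (card_le_μ n₀ t hu hne) ?_
    obtain ⟨h, hfh⟩ := hdvd
    have hh : ev h n₀ ≠ 0 := by
      have : ev (t.prod * h) n₀ ≠ 0 := by rw [← hfh]; exact hm
      rw [ev_mul] at this
      exact right_ne_zero_of_mul this
    rw [hN, hfh, μ_mul hne hh]
    omega
  -- the finite set of associate classes of divisors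
  set T : Finset (Associates IntValued) :=
    (hD.image Associates.mk).toFinset with hT
  set t₀ : Multiset (Associates IntValued) := N • T.val with ht₀
  apply Set.Finite.subset (t₀.powerset.finite_toSet)
  rintro s ⟨hirr, hprod⟩
  simp only [Multiset.mem_coe, Multiset.mem_powerset]
  -- each member of s is the class of a divisor of f
  have hmemT : ∀ a ∈ s, a ∈ T := by
    intro a ha
    have hdvd : a ∣ Associates.mk f := hprod ▸ Multiset.dvd_prod ha
    rw [← Associates.quot_out a, Associates.mk_dvd_mk] at hdvd
    rw [hT, Set.Finite.mem_toFinset]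
    exact ⟨Quot.out a, hdvd, Associates.quot_out a⟩
  -- the cardinality of s is at most N
  have hcards : Multiset.card s ≤ N := by
    set u : Multiset IntValued := s.map (fun a : Associates IntValued => Quot.out a) with hu
    have hmap : u.map Associates.mk = s := by
      rw [hu, Multiset.map_map]
      exact (Multiset.map_congr rfl (fun a _ => Associates.quot_out a)).trans
        (Multiset.map_id s)
    have hcu : Multiset.card u = Multiset.card s := by rw [hu, Multiset.card_map]
    rw [← hcu]
    apply hcard
    · intro x hx
      rw [hu, Multiset.mem_map] at hx
      obtain ⟨a, ha, rfl⟩ := hx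
      have := hirr a ha
      rw [← Associates.quot_out a, Associates.irreducible_mk] at this
      exact this.not_isUnit
    · have : Associates.mk u.prod = Associates.mk f := by
        rw [← Associates.prod_mk, hmap, hprod]
      exact Associates.mk_dvd_mk.mp (this ▸ dvd_refl _)
  -- conclude s ≤ t₀
  show s ≤ t₀
  rw [Multiset.le_iff_count]
  intro a
  by_cases ha : a ∈ s
  · rw [ht₀, Multiset.count_nsmul, Multiset.count_eq_one_of_mem T.nodup (hmemT a ha), mul_one]
    exact le_trans (Multiset.count_le_card a s) hcards
  · rw [Multiset.count_eq_zero_of_notMem ha]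
    exact Nat.zero_le _
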